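/- Let q ∈ (0,1], let n ≥ 1 and let i, j, k be nonnegative integers with i + j + k = n. Then the triangular q-Bernstein polynomials satisfy the recurrence B^n_{ijk}(u,v) = q^k u·B^{n-1}_{i-1,j,k}(u,v) + q^k v·B^{n-1}_{i,j-1,k}(u,v) + (1 − q^{k−1}u − q^{k−1}v)·B^{n-1}_{i,j,k-1}(u,v) for all real u, v, where by convention B^0_{000}(u,v) = 1 and B^m_{ijk}(u,v) = 0 whenever any of the indices i, j, k is negative. -/

import Mathlib

open Finset

/-- The q-integer [r] = 1 + q + ... + q^(r-1). -/
noncomputable def qInt (q : ℝ) (r : ℕ) : ℝ := ∑ s ∈ Finset.range r, q ^ s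

/-- The q-factorial [r]!. -/
noncomputable def qFact (q : ℝ) : ℕ → ℝ
  | 0 => 1
  | r + 1 => qInt q (r + 1) * qFact q r

/-- The q-binomial coefficient [i choose j]_q (zero unless i ≥ j ≥ 0). -/
noncomputable def qBinom (q : ℝ) (i j : ℕ) : ℝ :=
  if j ≤ i then qFact q i / (qFact q j * qFact q (i - j)) else 0

/-- The q-binomial coefficient with integer indices, zero unless i ≥ j ≥ 0. -/
noncomputable def qBinomZ (q : ℝ) (i j : ℤ) : ℝ :=
  if 0 ≤ j ∧ j ≤ i then qFact q i.toNat / (qFact q j.toNat * qFact q (i - j).toNat) else 0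

/-- The triangular q-Bernstein polynomial B^n_{ijk}(u,v)
    (meaningful for i + j + k = n). -/
noncomputable def triB (q : ℝ) (n i j k : ℕ) (u v : ℝ) : ℝ :=
  qBinom q n k * (Nat.choose (i + j) i : ℝ) * u ^ i * v ^ j *
    ∏ s ∈ Finset.range k, (1 - q ^ s * u - q ^ s * v)

/-- The triangular q-Bernstein polynomial with integer indices; by convention it is
    zero whenever any of the indices is negative. -/
noncomputable def triBZ (q : ℝ) (n : ℕ) (i j k : ℤ) (u v : ℝ) : ℝ :=
  if 0 ≤ i ∧ 0 ≤ j ∧ 0 ≤ k then triB q n i.toNat j.toNat k.toNat u v else 0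

/-- The classical triangular Bernstein polynomial b^n_{ijk}(u,v). -/
noncomputable def triBern (n i j k : ℕ) (u v : ℝ) : ℝ :=
  (Nat.factorial n : ℝ) /
      ((Nat.factorial i : ℝ) * (Nat.factorial j : ℝ) * (Nat.factorial k : ℝ)) *
    u ^ i * v ^ j * (1 - u - v) ^ k

/-- The set of triples (i, j, k) of nonnegative integers with i + j + k = n. -/
def simplex (n : ℕ) : Finset (ℕ × ℕ × ℕ) :=
  (Finset.range (n + 1) ×ˢ Finset.range (n + 1) ×ˢ Finset.range (n + 1)).filter
    (fun p => p.1 + p.2.1 + p.2.2 = n)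

lemma qInt_pos {q : ℝ} (hq : 0 < q) {r : ℕ} (hr : 1 ≤ r) : 0 < qInt q r := by
  apply Finset.sum_pos (fun s _ => pow_pos hq s)
  exact Finset.nonempty_range_iff.2 (by omega)

lemma qFact_pos {q : ℝ} (hq : 0 < q) (r : ℕ) : 0 < qFact q r := by
  induction r with
  | zero => norm_num [qFact]
  | succ m ih => exact mul_pos (qInt_pos hq (by omega)) ih

lemma qBinom_zero (q : ℝ) (hq : 0 < q) (n : ℕ) : qBinom q n 0 = 1 := by
  rw [qBinom, if_pos (Nat.zero_le n)]
  show qFact q n / (1 * qFact q (n - 0)) = 1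
  rw [Nat.sub_zero, one_mul, div_self (qFact_pos hq n).ne']

lemma qBinom_self (q : ℝ) (hq : 0 < q) (n : ℕ) : qBinom q n n = 1 := by
  rw [qBinom, if_pos le_rfl, Nat.sub_self]
  show qFact q n / (qFact q n * 1) = 1
  rw [mul_one, div_self (qFact_pos hq n).ne']

lemma qInt_add (q : ℝ) (a b : ℕ) : qInt q (a + b) = qInt q a + q ^ a * qInt q b := by
  induction b with
  | zero => simp [qInt]
  | succ m ih =>
    have : a + (m + 1) = (a + m) + 1 := by omega
    rw [this]
    simp only [qInt, Finset.sum_range_succ] at ih ⊢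
    rw [ih]; ring_nf

lemma qPascal (q : ℝ) (hq : 0 < q) {n k : ℕ} (hk : 1 ≤ k) (hkn : k ≤ n) :
    qBinom q n k = q ^ k * qBinom q (n - 1) k + qBinom q (n - 1) (k - 1) := by
  obtain ⟨m, rfl⟩ : ∃ m, n = m + 1 := ⟨n - 1, by omega⟩
  obtain ⟨l, rfl⟩ : ∃ l, k = l + 1 := ⟨k - 1, by omega⟩
  simp only [Nat.add_sub_cancel]
  rcases eq_or_lt_of_le hkn with h | h
  · -- k = n
    have : ¬ (l + 1 ≤ m) := by omega
    have hz : qBinom q m (l + 1) = 0 := by rw [qBinom, if_neg this]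
    rw [hz]
    obtain rfl : l = m := by omega
    rw [qBinom_self q hq, qBinom_self q hq]
    ring
  · have h1 : l + 1 ≤ m := by omega
    rw [qBinom, qBinom, qBinom, if_pos hkn, if_pos h1, if_pos (by omega : l ≤ m)]
    have e1 : m + 1 - (l + 1) = m - l := by omega
    have e2 : m - (l + 1) = m - l - 1 := by omega
    rw [e1, e2]
    have hml : 1 ≤ m - l := by omega
    obtain ⟨d, hd⟩ : ∃ d, m - l = d + 1 := ⟨m - l - 1, by omega⟩
    have hsum : qInt q (m + 1) = qInt q (l + 1) + q ^ (l + 1) * qInt q (m - l) := by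
      have : m + 1 = (l + 1) + (m - l) := by omega
      rw [this, qInt_add]
    rw [hd] at hsum ⊢
    simp only [Nat.add_sub_cancel]
    have fm1 : qFact q (m + 1) = qInt q (m + 1) * qFact q m := rfl
    have fl1 : qFact q (l + 1) = qInt q (l + 1) * qFact q l := rfl
    have fd1 : qFact q (d + 1) = qInt q (d + 1) * qFact q d := rfl
    rw [fm1, hsum, fl1, fd1]
    have p1 := (qInt_pos hq (by omega : 1 ≤ l + 1)).ne'
    have p2 := (qInt_pos hq (by omega : 1 ≤ d + 1)).ne'
    have p3 := (qFact_pos hq l).ne'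
    have p4 := (qFact_pos hq d).ne'
    field_simp
    ring

lemma triBZ_coe (q : ℝ) (n : ℕ) (i j k : ℕ) (u v : ℝ) :
    triBZ q n i j k u v = triB q n i j k u v := by simp [triBZ]

lemma triBZ_negi (q : ℝ) (n : ℕ) (j k : ℤ) (u v : ℝ) :
    triBZ q n (-1) j k u v = 0 := by simp [triBZ]

lemma triBZ_negj (q : ℝ) (n : ℕ) (i k : ℤ) (u v : ℝ) :
    triBZ q n i (-1) k u v = 0 := by simp [triBZ]

lemma triBZ_negk (q : ℝ) (n : ℕ) (i j : ℤ) (u v : ℝ) :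
    triBZ q n i j (-1) u v = 0 := by simp [triBZ]

/-- second recurrence for the triangular q-Bernstein polynomials. -/
theorem stmt1 (q : ℝ) (hq0 : 0 < q) (hq1 : q ≤ 1) (n : ℕ) (hn : 1 ≤ n)
    (i j k : ℕ) (hijk : i + j + k = n) (u v : ℝ) :
    triB q n i j k u v =
      q ^ k * u * triBZ q (n - 1) ((i : ℤ) - 1) (j : ℤ) (k : ℤ) u v +
      q ^ k * v * triBZ q (n - 1) (i : ℤ) ((j : ℤ) - 1) (k : ℤ) u v +
      (1 - q ^ ((k : ℤ) - 1) * u - q ^ ((k : ℤ) - 1) * v) *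
        triBZ q (n - 1) (i : ℤ) (j : ℤ) ((k : ℤ) - 1) u v := by
  obtain ⟨m, rfl⟩ : ∃ m, n = m + 1 := ⟨n - 1, by omega⟩
  rw [Nat.add_sub_cancel]
  rcases k with _ | l
  · -- k = 0
    rw [show ((0:ℕ):ℤ) - 1 = -1 by norm_num, triBZ_negk, mul_zero, add_zero]
    rcases i with _ | a
    · -- i = 0, j = m + 1
      obtain rfl : j = m + 1 := by omega
      rw [show ((0:ℕ):ℤ) - 1 = -1 by norm_num, triBZ_negi, mul_zero, zero_add,
        show ((m + 1 : ℕ) : ℤ) - 1 = ((m : ℕ) : ℤ) by push_cast; ring,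
        triBZ_coe, triB, triB, qBinom_zero q hq0, qBinom_zero q hq0]
      simp
      ring
    · rcases j with _ | b
      · -- j = 0, i = m + 1
        obtain rfl : a = m := by omega
        rw [show ((0:ℕ):ℤ) - 1 = -1 by norm_num, triBZ_negj, mul_zero, add_zero,
          show ((a + 1 : ℕ) : ℤ) - 1 = ((a : ℕ) : ℤ) by push_cast; ring,
          triBZ_coe, triB, triB, qBinom_zero q hq0, qBinom_zero q hq0]
        simp
        ring
      · -- i = a+1, j = b+1
        rw [show ((a + 1 : ℕ) : ℤ) - 1 = ((a : ℕ) : ℤ) by push_cast; ring,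
          show ((b + 1 : ℕ) : ℤ) - 1 = ((b : ℕ) : ℤ) by push_cast; ring,
          triBZ_coe, triBZ_coe, triB, triB, triB, qBinom_zero q hq0, qBinom_zero q hq0]
        have hch : (((a + 1) + (b + 1)).choose (a + 1) : ℝ) =
            ((a + (b + 1)).choose a : ℝ) + ((a + 1 + b).choose (a + 1) : ℝ) := by
          rw [show a + 1 + (b + 1) = (a + (b + 1)) + 1 from by ring, Nat.choose_succ_succ,
            show a + (b + 1) = a + 1 + b from by ring, Nat.succ_eq_add_one]
          push_cast; ring
        rw [hch]
        simp only [Finset.range_zero, Finset.prod_empty]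
        ring
  · -- k = l + 1
    have hzp : (q : ℝ) ^ (((l + 1 : ℕ) : ℤ) - 1) = q ^ l := by
      rw [show ((l + 1 : ℕ) : ℤ) - 1 = ((l : ℕ) : ℤ) by push_cast; ring, zpow_natCast]
    rw [hzp, show ((l + 1 : ℕ) : ℤ) - 1 = ((l : ℕ) : ℤ) by push_cast; ring]
    have hqp := qPascal q hq0 (by omega : 1 ≤ l + 1) (by omega : l + 1 ≤ m + 1)
    rw [Nat.add_sub_cancel] at hqp
    rcases i with _ | a
    · rw [show ((0:ℕ):ℤ) - 1 = -1 by norm_num, triBZ_negi, mul_zero, zero_add]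
      rcases j with _ | b
      · -- i = j = 0, k = m + 1
        obtain rfl : l = m := by omega
        rw [show ((0:ℕ):ℤ) - 1 = -1 by norm_num, triBZ_negj, mul_zero, zero_add,
          triBZ_coe, triB, triB, qBinom_self q hq0, qBinom_self q hq0,
          Finset.prod_range_succ]
        simp
        ring
      · -- i = 0, j = b+1
        rw [show ((b + 1 : ℕ) : ℤ) - 1 = ((b : ℕ) : ℤ) by push_cast; ring,
          triBZ_coe, triBZ_coe, triB, triB, triB, hqp, Finset.prod_range_succ]
        simp only [Nat.zero_add, Nat.choose_zero_right, Nat.cast_one, Nat.add_sub_cancel]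
        push_cast
        ring
    · rcases j with _ | b
      · -- j = 0, i = a+1
        rw [show ((0:ℕ):ℤ) - 1 = -1 by norm_num, triBZ_negj, mul_zero, add_zero,
          show ((a + 1 : ℕ) : ℤ) - 1 = ((a : ℕ) : ℤ) by push_cast; ring,
          triBZ_coe, triBZ_coe, triB, triB, triB, hqp, Finset.prod_range_succ]
        simp only [Nat.add_zero, Nat.choose_self, Nat.cast_one, Nat.add_sub_cancel]
        push_cast
        ring
      · -- i = a+1, j = b+1
        rw [show ((a + 1 : ℕ) : ℤ) - 1 = ((a : ℕ) : ℤ) by push_cast; ring,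
          show ((b + 1 : ℕ) : ℤ) - 1 = ((b : ℕ) : ℤ) by push_cast; ring,
          triBZ_coe, triBZ_coe, triBZ_coe, triB, triB, triB, triB, hqp,
          Finset.prod_range_succ]
        have hch : (((a + 1) + (b + 1)).choose (a + 1) : ℝ) =
            ((a + (b + 1)).choose a : ℝ) + ((a + 1 + b).choose (a + 1) : ℝ) := by
          rw [show a + 1 + (b + 1) = (a + (b + 1)) + 1 from by ring, Nat.choose_succ_succ,
            show a + (b + 1) = a + 1 + b from by ring, Nat.succ_eq_add_one]
          push_cast; ring
        rw [hch]
        simp only [Nat.add_sub_cancel]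
        ring
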